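/- arXiv:1608.04786 — 9 statements merged into one kernel-verified Lean document; each statement's English description precedes it below -/
import Mathlib

section
/- Let 𝒜 be an abelian category. Let 0 → A → E → C → 0 be a non-split short exact sequence and 0 → A → F → D → 0 a short exact sequence in 𝒜. Assume that every nonzero endomorphism of A is an isomorphism, that Hom(A,D) = 0, Hom(C,A) = 0 and Hom(C,D) = 0. Then Hom(E,F) = 0, i.e. every morphism E → F is zero. -/
open CategoryTheory

/-- The 'distinct parameters' case of Lemma 2.4: if `0 → A → E → C → 0` is a non-split
short exact sequence, `0 → A → F → D → 0` is a short exact sequence, every nonzero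
endomorphism of `A` is an isomorphism, and `Hom(A,D) = 0`, `Hom(C,A) = 0`, `Hom(C,D) = 0`,
then `Hom(E,F) = 0`. -/
theorem stmt_0 {𝒜 : Type*} [Category 𝒜] [Abelian 𝒜]
    {A E C F D : 𝒜}
    (i : A ⟶ E) (p : E ⟶ C) (hip : i ≫ p = 0)
    (j : A ⟶ F) (q : F ⟶ D) (hjq : j ≫ q = 0)
    (hE : (ShortComplex.mk i p hip).ShortExact)
    (hF : (ShortComplex.mk j q hjq).ShortExact)
    (hnonsplit : ∀ s : C ⟶ E, ¬ (s ≫ p = 𝟙 C))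
    (hA : ∀ φ : A ⟶ A, φ ≠ 0 → IsIso φ)
    (hAD : ∀ φ : A ⟶ D, φ = 0)
    (hCA : ∀ φ : C ⟶ A, φ = 0)
    (hCD : ∀ φ : C ⟶ D, φ = 0) :
    ∀ α : E ⟶ F, α = 0 := by
  intro α
  have hmi : Mono i := hE.mono_f
  have hpe : Epi p := hE.epi_g
  have hmj : Mono j := hF.mono_f
  -- i ≫ (α ≫ q) = 0 since Hom(A,D) = 0
  have h1 : i ≫ (α ≫ q) = 0 := by
    rw [← Category.assoc] at *
    simpa using (by rw [hAD (i ≫ α ≫ q)] : i ≫ α ≫ q = 0)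
  -- descend α ≫ q through p : it's p ≫ φ with φ : C ⟶ D, hence 0
  have h2 : α ≫ q = 0 := by
    have := hE.exact.g_desc (α ≫ q) h1
    rw [hCD (hE.exact.desc (α ≫ q) h1), Limits.comp_zero] at this
    exact this.symm
  -- lift α through j
  set u : E ⟶ A := hF.exact.lift α h2 with hu
  have huj : u ≫ j = α := hF.exact.lift_f α h2
  -- consider i ≫ u : A ⟶ A
  by_cases h3 : i ≫ u = 0
  · -- u descends through p to C ⟶ A, hence 0
    have := hE.exact.g_desc u h3
    rw [hCA (hE.exact.desc u h3), Limits.comp_zero] at this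
    rw [← huj, ← this, Limits.zero_comp]
  · -- i ≫ u is an iso, giving a retraction of i, hence a splitting: contradiction
    have := hA (i ≫ u) h3
    have hr : i ≫ (u ≫ inv (i ≫ u)) = 𝟙 A := by
      rw [← Category.assoc, IsIso.hom_inv_id]
    have splitting := ShortComplex.Splitting.ofExactOfRetraction _ hE.exact
      (u ≫ inv (i ≫ u)) hr hpe
    exact absurd splitting.s_g (hnonsplit splitting.s)
end

section
/- Let 𝒜 be an abelian category. Let 0 → A → E → C → 0 and 0 → A → F → C → 0 be two non-split short exact sequences in 𝒜. Assume that every nonzero endomorphism of A is an isomorphism, that every nonzero endomorphism of C is an isomorphism, and that Hom(A,C) = 0 and Hom(C,A) = 0. Then every nonzero morphism α : E → F is an isomorphism. -/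
open CategoryTheory

/-- The 'equal parameters' case of Lemma 2.4: if `0 → A → E → C → 0` and
`0 → A → F → C → 0` are non-split short exact sequences, every nonzero endomorphism of
`A` is an isomorphism, every nonzero endomorphism of `C` is an isomorphism, and
`Hom(A,C) = 0`, `Hom(C,A) = 0`, then every nonzero morphism `E ⟶ F` is an isomorphism. -/
theorem stmt_1 {𝒜 : Type*} [Category 𝒜] [Abelian 𝒜]
    {A E C F : 𝒜}
    (i : A ⟶ E) (p : E ⟶ C) (hip : i ≫ p = 0)
    (j : A ⟶ F) (q : F ⟶ C) (hjq : j ≫ q = 0)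
    (hE : (ShortComplex.mk i p hip).ShortExact)
    (hF : (ShortComplex.mk j q hjq).ShortExact)
    (hEnonsplit : ∀ s : C ⟶ E, ¬ (s ≫ p = 𝟙 C))
    (hFnonsplit : ∀ s : C ⟶ F, ¬ (s ≫ q = 𝟙 C))
    (hA : ∀ φ : A ⟶ A, φ ≠ 0 → IsIso φ)
    (hC : ∀ φ : C ⟶ C, φ ≠ 0 → IsIso φ)
    (hAC : ∀ φ : A ⟶ C, φ = 0)
    (hCA : ∀ φ : C ⟶ A, φ = 0) :
    ∀ α : E ⟶ F, α ≠ 0 → IsIso α := by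
  intro α hα
  have := hE.mono_f
  have := hE.epi_g
  have := hF.mono_f
  have := hF.epi_g
  -- φ : A ⟶ A with φ ≫ j = i ≫ α
  have hφ0 : (i ≫ α) ≫ q = 0 := by
    rw [Category.assoc]; exact hAC _
  set φ : A ⟶ A := hF.exact.lift (i ≫ α) hφ0 with hφdef
  have hφ : φ ≫ j = i ≫ α := hF.exact.lift_f _ _
  -- ψ : C ⟶ C with p ≫ ψ = α ≫ q
  have hψ0 : i ≫ (α ≫ q) = 0 := hAC _
  set ψ : C ⟶ C := hE.exact.desc (α ≫ q) hψ0 with hψdef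
  have hψ : p ≫ ψ = α ≫ q := hE.exact.g_desc _ _
  -- φ ≠ 0
  have hφne : φ ≠ 0 := by
    intro h0
    have hiα : i ≫ α = 0 := by rw [← hφ, h0, Limits.zero_comp]
    -- α factors through C
    obtain ⟨β, hβ⟩ := hE.exact.desc' α hiα
    -- β ≫ q = ψ
    have hβq : p ≫ (β ≫ q) = p ≫ ψ := by rw [← Category.assoc, hβ, hψ]
    have hβψ : β ≫ q = ψ := by
      rwa [cancel_epi p] at hβq
    by_cases hψne : ψ = 0
    · -- β factors through A, hence β = 0, hence α = 0
      have hβq0 : β ≫ q = 0 := by rw [hβψ, hψne]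
      obtain ⟨γ, hγ⟩ := hF.exact.lift' β hβq0
      have : β = 0 := by rw [← hγ, hCA γ, Limits.zero_comp]
      exact hα (by rw [← hβ, this, Limits.comp_zero])
    · have := hC ψ hψne
      exact hFnonsplit (inv ψ ≫ β) (by simp [hβψ])
  -- ψ ≠ 0
  have hψne : ψ ≠ 0 := by
    intro h0
    have hαq : α ≫ q = 0 := by rw [← hψ, h0, Limits.comp_zero]
    obtain ⟨α', hα'⟩ := hF.exact.lift' α hαq
    have hiα' : (i ≫ α') ≫ j = φ ≫ j := by
      rw [Category.assoc, hα', hφ]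
    have h1 : i ≫ α' = φ := by rwa [cancel_mono j] at hiα'
    have := hA φ hφne
    have hr : i ≫ (α' ≫ inv φ) = 𝟙 A := by rw [← Category.assoc, h1]; simp
    have spl := ShortComplex.Splitting.ofExactOfRetraction _ hE.exact (α' ≫ inv φ) hr hE.epi_g
    exact hEnonsplit spl.s spl.s_g
  -- conclude via the five lemma
  have hAiso := hA φ hφne
  have hCiso := hC ψ hψne
  let τ : (ShortComplex.mk i p hip) ⟶ (ShortComplex.mk j q hjq) :=
    { τ₁ := φ, τ₂ := α, τ₃ := ψ, comm₁₂ := hφ, comm₂₃ := hψ.symm }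
  exact ShortComplex.isIso₂_of_shortExact_of_isIso₁₃' τ hE hF hAiso hCiso
end

section
/- Let Λ be a ℤ-module equipped with a symmetric ℤ-bilinear form, written x·y. Let ℓ, m ∈ Λ and z ∈ ℤ satisfy ℓ·ℓ = 4z − 8, ℓ·ℓ > 0, and ℓ·m − m·m > z. Then ℓ and m are linearly independent over ℤ: for all integers α, β, if α·m = β·ℓ in Λ then α = 0 and β = 0. -/
/-- Final claim of Lemma 3.6: if `ℓ·ℓ = 4z − 8 > 0` and `ℓ·m − m·m > z` then `ℓ` and `m`
are linearly independent over `ℤ`. -/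
theorem stmt_2 {Λ : Type*} [AddCommGroup Λ] [Module ℤ Λ]
    (B : Λ →ₗ[ℤ] Λ →ₗ[ℤ] ℤ) (hsym : ∀ x y : Λ, B x y = B y x)
    (ℓ m : Λ) (z : ℤ)
    (hll : B ℓ ℓ = 4 * z - 8)
    (hpos : 0 < B ℓ ℓ)
    (hlm : B ℓ m - B m m > z) :
    ∀ α β : ℤ, α • m = β • ℓ → α = 0 ∧ β = 0 := by
  intro α β h
  have h1 : α * B ℓ m = β * B ℓ ℓ := by
    have := congrArg (B ℓ) h
    simpa [smul_eq_mul] using this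
  have h2 : α * B m m = β * B ℓ m := by
    have := congrArg (fun x => B x m) h
    simpa [smul_eq_mul, hsym m ℓ] using this
  by_cases hα : α = 0
  · subst hα
    simp only [zero_mul] at h1
    have hβ : β = 0 := by
      rcases mul_eq_zero.mp h1.symm with h' | h'
      · exact h'
      · exact absurd h' (ne_of_gt hpos)
    exact ⟨rfl, hβ⟩
  · exfalso
    have hα2 : 0 < α ^ 2 := by positivity
    have key : α ^ 2 * (B ℓ m - B m m) > α ^ 2 * z := by
      exact (mul_lt_mul_iff_right₀ hα2).mpr hlm
    have e1 : α ^ 2 * B ℓ m = α * β * B ℓ ℓ := by linear_combination α * h1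
    have e2 : α ^ 2 * B m m = β ^ 2 * B ℓ ℓ := by linear_combination α * h2 + β * h1
    nlinarith [mul_nonneg (sq_nonneg (α - 2 * β)) hpos.le, key, e1, e2, hll, hα2]
end

section
/- Let n ≥ 0 be a natural number and set z = 2n + 3. Let α, c, x, y be integers satisfying: (i) x = z − 4 − 2c; (ii) 2α + 4y(z−2) + (z−4)² = 1; (iii) 2zα − 4c²(z−2) + 2z² = 2; (iv) 2α + 4c(z−2) + z(z−4) + 4z = 1. Then (z + 2c)² = 1, α = 2c(c+2), y = c + 2, and either c = −n−1 and x = 4n+1, or c = −n−2 and x = 4n+3. -/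
/-- The integer computation in the proof of Proposition 3.8. -/
theorem stmt_3 (n : ℕ) (α c x y : ℤ)
    (z : ℤ) (hz : z = 2 * (n : ℤ) + 3)
    (h1 : x = z - 4 - 2 * c)
    (h2 : 2 * α + 4 * y * (z - 2) + (z - 4) ^ 2 = 1)
    (h3 : 2 * z * α - 4 * c ^ 2 * (z - 2) + 2 * z ^ 2 = 2)
    (h4 : 2 * α + 4 * c * (z - 2) + z * (z - 4) + 4 * z = 1) :
    (z + 2 * c) ^ 2 = 1 ∧ α = 2 * c * (c + 2) ∧ y = c + 2 ∧
      ((c = -(n : ℤ) - 1 ∧ x = 4 * (n : ℤ) + 1) ∨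
        (c = -(n : ℤ) - 2 ∧ x = 4 * (n : ℤ) + 3)) := by
  have hzne : z - 2 ≠ 0 := by
    have : (0:ℤ) ≤ (n:ℤ) := Int.natCast_nonneg n
    omega
  have h5 : (z - 2) * ((z + 2 * c) ^ 2 - 1) = 0 := by linear_combination z * h4 - h3
  have hkey : (z + 2 * c) ^ 2 = 1 := by
    rcases mul_eq_zero.mp h5 with h | h
    · exact absurd h hzne
    · linarith
  have h6 : (z - 2) * (y - c - 2) = 0 := by
    have h6' : (4 : ℤ) * ((z - 2) * (y - c - 2)) = 0 := by linear_combination h2 - h4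
    rcases mul_eq_zero.mp h6' with h | h
    · norm_num at h
    · exact h
  have hy : y = c + 2 := by
    rcases mul_eq_zero.mp h6 with h | h
    · exact absurd h hzne
    · linarith
  have hα : α = 2 * c * (c + 2) := by
    have hα' : (2 : ℤ) * (α - 2 * c * (c + 2)) = 0 := by linear_combination h4 - hkey
    rcases mul_eq_zero.mp hα' with h | h
    · norm_num at h
    · linarith
  refine ⟨hkey, hα, hy, ?_⟩
  have h7 : (z + 2 * c - 1) * (z + 2 * c + 1) = 0 := by linear_combination hkey
  rcases mul_eq_zero.mp h7 with h | h
  · left; omega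
  · right; omega
end

section
/- Let V be a ℚ-vector space with a symmetric ℚ-bilinear form x·y. On triples (r,f,t) ∈ ℚ × V × ℚ define the product (r,f,t)*(r',f',t') = (rr', rf' + r'f, rt' + r't + f·f'), for x ∈ V set ch(x) = (1, x, (x·x)/2), and set χ(r,f,t) = 2r + t. Let ℓ ∈ V satisfy ℓ·ℓ = −4. Then for any f ∈ V and r, t ∈ ℚ, writing F = (r,f,t), the triple χ(F*ch(0))·ch(0) + χ(F*ch(ℓ))·ch(−ℓ) − F*ch(ℓ)*ch(−ℓ) equals (r + f·ℓ + 2t, −(f·ℓ + t)ℓ − f, −2 f·ℓ − 3t). -/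
/-- Cup product of Chern-character triples `(ch₀, ch₁, ∫ch₂)` on a K3 surface. -/
def mukaiMul {V : Type*} [AddCommGroup V] [Module ℚ V]
    (B : V →ₗ[ℚ] V →ₗ[ℚ] ℚ) (x y : ℚ × V × ℚ) : ℚ × V × ℚ :=
  (x.1 * y.1, x.1 • y.2.1 + y.1 • x.2.1, x.1 * y.2.2 + y.1 * x.2.2 + B x.2.1 y.2.1)

/-- Chern character of a line bundle with first Chern class `x`. -/
def chLine {V : Type*} [AddCommGroup V] [Module ℚ V]
    (B : V →ₗ[ℚ] V →ₗ[ℚ] ℚ) (x : V) : ℚ × V × ℚ :=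
  (1, x, B x x / 2)

/-- Euler characteristic via Riemann–Roch on a K3 surface. -/
def chiK3 {V : Type*} [AddCommGroup V] [Module ℚ V] (x : ℚ × V × ℚ) : ℚ :=
  2 * x.1 + x.2.2


/-- The Chern character formula of Theorem 2.6: for a K3 surface with a line bundle `L`
with no cohomology (so `ℓ·ℓ = −4`), the transform of `(r, f, t)` is
`(r + f·ℓ + 2t, −(f·ℓ + t)ℓ − f, −2f·ℓ − 3t)`. -/
theorem stmt_5 {V : Type*} [AddCommGroup V] [Module ℚ V]
    (B : V →ₗ[ℚ] V →ₗ[ℚ] ℚ) (hsym : ∀ x y : V, B x y = B y x)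
    (ℓ : V) (hll : B ℓ ℓ = -4)
    (f : V) (r t : ℚ) :
    (chiK3 (mukaiMul B (r, f, t) (chLine B (0 : V)))) • chLine B (0 : V) +
      (chiK3 (mukaiMul B (r, f, t) (chLine B ℓ))) • chLine B (-ℓ) -
      mukaiMul B (mukaiMul B (r, f, t) (chLine B ℓ)) (chLine B (-ℓ)) =
    (r + B f ℓ + 2 * t, -(B f ℓ + t) • ℓ - f, -2 * B f ℓ - 3 * t) := by
  simp only [mukaiMul, chLine, chiK3, Prod.ext_iff, Prod.smul_def, Prod.fst_add, Prod.snd_add, Prod.fst_sub, Prod.snd_sub, smul_eq_mul, map_zero, map_neg, map_smul, LinearMap.zero_apply, LinearMap.neg_apply, LinearMap.smul_apply, hll, hsym f ℓ]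
  refine ⟨by ring, ?_, ?_⟩
  case _ => match_scalars <;> ring
  simp only [map_add, map_smul, LinearMap.add_apply, LinearMap.smul_apply, smul_eq_mul, hll, hsym f ℓ]
  ring
end

section
/- Let V be a ℚ-vector space with a symmetric ℚ-bilinear form x·y. On triples (r,f,t) ∈ ℚ × V × ℚ define the product (r,f,t)*(r',f',t') = (rr', rf' + r'f, rt' + r't + f·f'), for x ∈ V set ch(x) = (1, x, (x·x)/2), and set χ(r,f,t) = 2r + t. Let h, ℓ ∈ V satisfy h·h = 2, ℓ·ℓ = −12, h·ℓ = 0. Then for any f ∈ V and r, t ∈ ℚ, writing F = (r,f,t), the triple χ(F*ch(−h))·ch(3ℓ+7h) + χ(F*ch(ℓ+h))·ch(2ℓ+5h) − F*ch(ℓ+h)*ch(2ℓ+5h) equals (−r + f·ℓ + 2t, −f + (f·(ℓ+2h))(2ℓ+5h) − (f·h − t)(5ℓ+12h), −2 f·ℓ − 5t). -/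
/-- The Chern character formula of Theorem 4.2 for a non-degenerate reflexive K3 surface
(`h·h = 2`, `ℓ·ℓ = −12`, `h·ℓ = 0`). -/
theorem stmt_6 {V : Type*} [AddCommGroup V] [Module ℚ V]
    (B : V →ₗ[ℚ] V →ₗ[ℚ] ℚ) (hsym : ∀ x y : V, B x y = B y x)
    (h ℓ : V) (hhh : B h h = 2) (hll : B ℓ ℓ = -12) (hhl : B h ℓ = 0)
    (f : V) (r t : ℚ) :
    (chiK3 (mukaiMul B (r, f, t) (chLine B (-h)))) • chLine B ((3 : ℚ) • ℓ + (7 : ℚ) • h) +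
      (chiK3 (mukaiMul B (r, f, t) (chLine B (ℓ + h)))) •
        chLine B ((2 : ℚ) • ℓ + (5 : ℚ) • h) -
      mukaiMul B (mukaiMul B (r, f, t) (chLine B (ℓ + h)))
        (chLine B ((2 : ℚ) • ℓ + (5 : ℚ) • h)) =
    (-r + B f ℓ + 2 * t,
      -f + (B f (ℓ + (2 : ℚ) • h)) • ((2 : ℚ) • ℓ + (5 : ℚ) • h) -
        (B f h - t) • ((5 : ℚ) • ℓ + (12 : ℚ) • h),
      -2 * B f ℓ - 5 * t) := by
  have hlh : B ℓ h = 0 := by rw [hsym]; exact hhl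
  have hfe : ∀ x y : V, B f (x + y) = B f x + B f y := fun x y => map_add _ _ _
  simp only [mukaiMul, chLine, chiK3, Prod.ext_iff, Prod.smul_mk, Prod.mk_add_mk,
    Prod.mk_sub_mk, smul_eq_mul, map_add, map_smul, map_neg, LinearMap.add_apply,
    LinearMap.smul_apply, LinearMap.neg_apply, hhh, hll, hhl, hlh, smul_add, smul_smul,
    smul_neg, Prod.fst_add, Prod.snd_add, Prod.fst_sub, Prod.snd_sub]
  refine ⟨by ring, ?_, by ring⟩
  match_scalars <;> ring
end

section
/- Let V be a ℚ-vector space with a symmetric ℚ-bilinear form x·y. On triples (r,f,t) ∈ ℚ × V × ℚ define the product (r,f,t)*(r',f',t') = (rr', rf' + r'f, rt' + r't + f·f'), for x ∈ V set ch(x) = (1, x, (x·x)/2), and set χ(r,f,t) = 2r + t. Let h, d₁, d₂ ∈ V satisfy h·h = 2, d₁·d₁ = −2, d₂·d₂ = −2, d₁·d₂ = 0, h·d₁ = 2, h·d₂ = 2, and set ℓ = d₁ + d₂ − 2h. Then for any f ∈ V and r, t ∈ ℚ, writing F = (r,f,t), the triple χ(F*ch(d₁−h))·ch(h−d₁) +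 χ(F*ch(d₂−h))·ch(h−d₂) − F*ch(d₂−h)*ch(h−d₂) equals (−r + f·ℓ + 2t, −f − tℓ − (f·(d₁−h))(d₁−h) − (f·(d₂−h))(d₂−h), −2 f·ℓ − 5t). -/
/-- The type I Chern character computation in Theorem 5.3 (degenerate reflexive K3 surface
of type I: `h·h = 2`, `dᵢ·dᵢ = −2`, `d₁·d₂ = 0`, `h·dᵢ = 2`, `ℓ = d₁ + d₂ − 2h`). -/
theorem stmt_7 {V : Type*} [AddCommGroup V] [Module ℚ V]
    (B : V →ₗ[ℚ] V →ₗ[ℚ] ℚ) (hsym : ∀ x y : V, B x y = B y x)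
    (h d₁ d₂ : V) (hhh : B h h = 2) (hd₁ : B d₁ d₁ = -2) (hd₂ : B d₂ d₂ = -2)
    (hd₁d₂ : B d₁ d₂ = 0) (hhd₁ : B h d₁ = 2) (hhd₂ : B h d₂ = 2)
    (ℓ : V) (hl : ℓ = d₁ + d₂ - (2 : ℚ) • h)
    (f : V) (r t : ℚ) :
    (chiK3 (mukaiMul B (r, f, t) (chLine B (d₁ - h)))) • chLine B (h - d₁) +
      (chiK3 (mukaiMul B (r, f, t) (chLine B (d₂ - h)))) • chLine B (h - d₂) -
      mukaiMul B (mukaiMul B (r, f, t) (chLine B (d₂ - h))) (chLine B (h - d₂)) =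
    (-r + B f ℓ + 2 * t,
      -f - t • ℓ - (B f (d₁ - h)) • (d₁ - h) - (B f (d₂ - h)) • (d₂ - h),
      -2 * B f ℓ - 5 * t) := by
  subst hl
  simp only [mukaiMul, chLine, chiK3, Prod.mk_add_mk, Prod.mk_sub_mk, Prod.smul_mk,
    map_sub, map_add, map_smul, LinearMap.sub_apply, LinearMap.add_apply, LinearMap.smul_apply,
    smul_eq_mul, hhh, hd₁, hd₂, hd₁d₂, hhd₁, hhd₂, hsym d₁ h, hsym d₂ h, hsym d₂ d₁,
    Prod.ext_iff]
  refine ⟨by ring, ?_, by ring⟩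
  match_scalars <;> ring
end

section
/- Let V be a ℚ-vector space with a symmetric ℚ-bilinear form x·y. On triples (r,f,t) ∈ ℚ × V × ℚ define the product (r,f,t)*(r',f',t') = (rr', rf' + r'f, rt' + r't + f·f'), for x ∈ V set ch(x) = (1, x, (x·x)/2), and set χ(r,f,t) = 2r + t. Let h, d₁, d₂ ∈ V satisfy h·h = 2, d₁·d₁ = −2, d₂·d₂ = −2, d₁·d₂ = 0, h·d₁ = 1, h·d₂ = 3, and set ℓ = d₁ + d₂ − 2h. Then for any f ∈ V and r, t ∈ ℚ, writing F = (r,f,t), the triple χ(F*ch(d₁−h))·ch(d₂−2d₁+h) + χ(F*ch(d₂−h))·ch(h−d₁) − F*ch(d₂−h)*ch(h−d₁) equals (−r + f·ℓ + 2t, −f + (f·(d₁−h))(d₂−2d₁+h) + (f·(d₂−h))(h−d₁) + t(d₂−3d₁+2h), −2 f·ℓ − 5t). -/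
/-- The type II Chern character computation in Theorem 5.3 (degenerate reflexive K3 surface
of type II: `h·h = 2`, `dᵢ·dᵢ = −2`, `d₁·d₂ = 0`, `h·d₁ = 1`, `h·d₂ = 3`,
`ℓ = d₁ + d₂ − 2h`). -/
theorem stmt_8 {V : Type*} [AddCommGroup V] [Module ℚ V]
    (B : V →ₗ[ℚ] V →ₗ[ℚ] ℚ) (hsym : ∀ x y : V, B x y = B y x)
    (h d₁ d₂ : V) (hhh : B h h = 2) (hd₁ : B d₁ d₁ = -2) (hd₂ : B d₂ d₂ = -2)
    (hd₁d₂ : B d₁ d₂ = 0) (hhd₁ : B h d₁ = 1) (hhd₂ : B h d₂ = 3)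
    (ℓ : V) (hl : ℓ = d₁ + d₂ - (2 : ℚ) • h)
    (f : V) (r t : ℚ) :
    (chiK3 (mukaiMul B (r, f, t) (chLine B (d₁ - h)))) •
        chLine B (d₂ - (2 : ℚ) • d₁ + h) +
      (chiK3 (mukaiMul B (r, f, t) (chLine B (d₂ - h)))) • chLine B (h - d₁) -
      mukaiMul B (mukaiMul B (r, f, t) (chLine B (d₂ - h))) (chLine B (h - d₁)) =
    (-r + B f ℓ + 2 * t,
      -f + (B f (d₁ - h)) • (d₂ - (2 : ℚ) • d₁ + h) + (B f (d₂ - h)) • (h - d₁) +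
        t • (d₂ - (3 : ℚ) • d₁ + (2 : ℚ) • h),
      -2 * B f ℓ - 5 * t) := by
  subst hl
  simp only [mukaiMul, chLine, chiK3, Prod.smul_mk, Prod.mk_add_mk, Prod.mk_sub_mk,
    smul_eq_mul, map_add, map_sub, map_smul, LinearMap.add_apply, LinearMap.sub_apply,
    LinearMap.smul_apply, hhh, hd₁, hd₂, hd₁d₂, hhd₁, hhd₂, hsym d₂ d₁, hsym h d₁, hsym h d₂,
    hsym d₁ h, hsym d₂ h, hsym f h, hsym f d₁, hsym f d₂]
  refine Prod.ext ?_ (Prod.ext ?_ ?_)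
  · simp only []; ring
  · simp only []; module
  · simp only []; ring
end

section
/- Let Λ be a ℤ-module equipped with a symmetric ℤ-bilinear form, written x·y. Let c₁, c₂, c₃ ∈ Λ satisfy: cᵢ·cᵢ = −2 for all i; for all i ≠ j, if cᵢ ≠ cⱼ then cᵢ·cⱼ ≥ 0; and (c₁+c₂+c₃)·(c₁+c₂+c₃) = −4. Then there is a partition of the index set {1,2,3} into a singleton {i} and a pair {j,k} such that, setting d₁ = cᵢ and d₂ = cⱼ + c_k, one has d₁·d₁ = −2, d₂·d₂ = −2 and d₁·d₂ = 0. -/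
/-- The three-component case of the Appendix Lemma: if `c₁, c₂, c₃` are `(−2)`-classes
with `cᵢ·cⱼ ≥ 0` whenever `cᵢ ≠ cⱼ` (`i ≠ j`) and `(c₁+c₂+c₃)² = −4`, then the index set
splits into a singleton `{i}` and a pair `{j, k}` such that `d₁ = cᵢ` and `d₂ = cⱼ + c_k`
satisfy `d₁² = −2 = d₂²` and `d₁·d₂ = 0`. -/
theorem stmt_10 {Λ : Type*} [AddCommGroup Λ] [Module ℤ Λ]
    (B : Λ →ₗ[ℤ] Λ →ₗ[ℤ] ℤ) (hsym : ∀ x y : Λ, B x y = B y x)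
    (c : Fin 3 → Λ)
    (hsq : ∀ i, B (c i) (c i) = -2)
    (hij : ∀ i j, i ≠ j → c i ≠ c j → 0 ≤ B (c i) (c j))
    (hsum : B (c 0 + c 1 + c 2) (c 0 + c 1 + c 2) = -4) :
    ∃ i j k : Fin 3, i ≠ j ∧ i ≠ k ∧ j ≠ k ∧
      ({i, j, k} : Finset (Fin 3)) = Finset.univ ∧
      B (c i) (c i) = -2 ∧
      B (c j + c k) (c j + c k) = -2 ∧
      B (c i) (c j + c k) = 0 := by
  simp only [map_add, LinearMap.add_apply] at hsum
  rw [hsq 0, hsq 1, hsq 2, hsym (c 1) (c 0), hsym (c 2) (c 0), hsym (c 2) (c 1)] at hsum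
  set a := B (c 0) (c 1) with ha'
  set b := B (c 0) (c 2) with hb'
  set d := B (c 1) (c 2) with hd'
  have key : a + b + d = 1 := by omega
  have ha : 0 ≤ a := by
    by_cases h : c 0 = c 1
    · have h1 : a = -2 := by rw [ha', h, hsq 1]
      have h2 : b = d := by rw [hb', hd', h]
      omega
    · exact hij 0 1 (by decide) h
  have hb : 0 ≤ b := by
    by_cases h : c 0 = c 2
    · have h1 : b = -2 := by rw [hb', h, hsq 2]
      have h2 : a = d := by rw [ha', hd', h, hsym]
      omega
    · exact hij 0 2 (by decide) h
  have hd : 0 ≤ d := by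
    by_cases h : c 1 = c 2
    · have h1 : d = -2 := by rw [hd', h, hsq 2]
      have h2 : a = b := by rw [ha', hb', h]
      omega
    · exact hij 1 2 (by decide) h
  have hcase : (a = 1 ∧ b = 0 ∧ d = 0) ∨ (b = 1 ∧ a = 0 ∧ d = 0) ∨
      (d = 1 ∧ a = 0 ∧ b = 0) := by omega
  rcases hcase with ⟨h1, h2, h3⟩ | ⟨h1, h2, h3⟩ | ⟨h1, h2, h3⟩
  · refine ⟨2, 0, 1, by decide, by decide, by decide, by decide, hsq 2, ?_, ?_⟩
    · simp only [map_add, LinearMap.add_apply, hsq 0, hsq 1, ← ha', hsym (c 1) (c 0)]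
      omega
    · simp only [map_add, hsym (c 2) (c 0), hsym (c 2) (c 1), ← hb', ← hd']
      omega
  · refine ⟨1, 0, 2, by decide, by decide, by decide, by decide, hsq 1, ?_, ?_⟩
    · simp only [map_add, LinearMap.add_apply, hsq 0, hsq 2, ← hb', hsym (c 2) (c 0)]
      omega
    · simp only [map_add, hsym (c 1) (c 0), ← ha', ← hd']
      omega
  · refine ⟨0, 1, 2, by decide, by decide, by decide, by decide, hsq 0, ?_, ?_⟩
    · simp only [map_add, LinearMap.add_apply, hsq 1, hsq 2, ← hd', hsym (c 2) (c 1)]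
      omega
    · simp only [map_add, ← ha', ← hb']
      omega
end
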